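/- Hopf-module property of the right action: defining m ◁ â := F₁⁻¹(Ŝ₁(â)) * m for â ∈ A₀,₁ and m ∈ M, one has (m ◁ â) ◁ b̂ = m ◁ (â b̂) for all â, b̂ ∈ A₀,₁ and m ∈ M. -/
import Mathlib


/-- Hopf-module property of the right action: defining
`m ◁ â := F₁⁻¹(Ŝ₁(â)) * m` for `â ∈ A₀,₁` and `m ∈ M`, one has
`(m ◁ â) ◁ b̂ = m ◁ (â b̂)`.  Here `conv a m = w₋₁* a γ(m) w₋₁` is the
convolution (mixed) product, `F₁` is the Fourier transform, a bijection from
`A₋₁,₀` onto `A₀,₁` with `F₁(a * b) = F₁(a) F₁(b)` and inverse `Finv`, and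
`Ŝ₁` is the antipode on `A₀,₁`, an involutive anti-automorphism. -/
theorem right_action_hopf_module_property
    {B : Type*} [Ring B] [StarRing B] [Algebra ℂ B] [StarModule ℂ B]
    (Mset A A01 : Set B) (hAM : A ⊆ Mset)
    (conv : B → B → B)
    (hconvA : ∀ a ∈ A, ∀ b ∈ A, conv a b ∈ A)
    (hconvM : ∀ a ∈ A, ∀ m ∈ Mset, conv a m ∈ Mset)
    (hassoc : ∀ a ∈ A, ∀ b ∈ A, ∀ m ∈ Mset,
      conv (conv a b) m = conv a (conv b m))
    (F₁ Finv S₁ : B → B)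
    (hF₁maps : ∀ a ∈ A, F₁ a ∈ A01)
    (hFinvmaps : ∀ x ∈ A01, Finv x ∈ A)
    (hleftinv : ∀ a ∈ A, Finv (F₁ a) = a)
    (hrightinv : ∀ x ∈ A01, F₁ (Finv x) = x)
    (hF₁mul : ∀ a ∈ A, ∀ b ∈ A, F₁ (conv a b) = F₁ a * F₁ b)
    (hA01mul : ∀ x ∈ A01, ∀ y ∈ A01, x * y ∈ A01)
    (hS₁maps : ∀ x ∈ A01, S₁ x ∈ A01)
    (hS₁anti : ∀ x ∈ A01, ∀ y ∈ A01, S₁ (x * y) = S₁ y * S₁ x)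
    (hS₁invol : ∀ x ∈ A01, S₁ (S₁ x) = x) :
    ∀ m ∈ Mset, ∀ ahat ∈ A01, ∀ bhat ∈ A01,
      conv (Finv (S₁ bhat)) (conv (Finv (S₁ ahat)) m)
        = conv (Finv (S₁ (ahat * bhat))) m := by
  intro m hm ahat ha bhat hb
  have hSa := hS₁maps ahat ha
  have hSb := hS₁maps bhat hb
  have ha' := hFinvmaps _ hSa
  have hb' := hFinvmaps _ hSb
  have key : Finv (S₁ (ahat * bhat)) = conv (Finv (S₁ bhat)) (Finv (S₁ ahat)) := by
    have : F₁ (conv (Finv (S₁ bhat)) (Finv (S₁ ahat))) = S₁ (ahat * bhat) := by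
      rw [hF₁mul _ hb' _ ha', hrightinv _ hSb, hrightinv _ hSa,
        hS₁anti _ ha _ hb]
    rw [← this, hleftinv _ (hconvA _ hb' _ ha')]
  rw [key, hassoc _ hb' _ ha' _ hm]
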